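/- Let n, α, k ∈ ℕ, let U = {1,…,n}, and for each t ∈ {1,…,α} let F_t be a family of pairwise disjoint subsets of U, each of size at least 2. Let (G, col) be the α-edge-colored graph associated with this Partitioned Hitting Set instance. Then there exists a set S ⊆ U with |S| ≤ k such that S ∩ f ≠ ∅ for every t ∈ {1,…,α} and every f ∈ F_t, if and only if (G, col) has a simultaneous feedback edge set of size at most k. -/

import Mathlib

/-- An ordered pair `(i, j)` of elements of the set `f` is *consecutive* if either
`i < j` and `f` contains no element strictly between `i` and `j`, or `i = max f` and
`j = min f`. -/
def consecPair {n : ℕ} (f : Finset (Fin n)) (i j : Fin n) : Prop :=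
  (i ∈ f ∧ j ∈ f ∧ i < j ∧ ∀ l ∈ f, ¬(i < l ∧ l < j)) ∨
  (i ∈ f ∧ j ∈ f ∧ (∀ l ∈ f, l ≤ i) ∧ (∀ l ∈ f, j ≤ l))

/-- The underlying graph `G` of the `α`-edge-colored graph associated with a
Partitioned Hitting Set instance `F : Fin α → Finset (Finset (Fin n))`.  The vertices
`v i`, `w i` are `Sum.inl (i, false)`, `Sum.inl (i, true)`, and `s_{i,j,t}` is
`Sum.inr (i, j, t)` (isolated unless `(i, j)` is `(t,f)`-consecutive for some
`f ∈ F t`). -/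
def phsGraph (n α : ℕ) (F : Fin α → Finset (Finset (Fin n))) :
    SimpleGraph ((Fin n × Bool) ⊕ (Fin n × Fin n × Fin α)) :=
  SimpleGraph.fromRel fun a b =>
    (∃ i : Fin n, a = Sum.inl (i, false) ∧ b = Sum.inl (i, true)) ∨
    (∃ (i j : Fin n) (t : Fin α), (∃ f ∈ F t, consecPair f i j) ∧
        a = Sum.inl (i, true) ∧ b = Sum.inr (i, j, t)) ∨
    (∃ (i j : Fin n) (t : Fin α), (∃ f ∈ F t, consecPair f i j) ∧
        a = Sum.inr (i, j, t) ∧ b = Sum.inl (j, false))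

/-- The color-`t` graph `G_t` of the associated `α`-edge-colored graph: the edge
`{v i, w i}` has color set `{t : i belongs to some member of F t}`, and the edges
`{w i, s_{i,j,t}}`, `{s_{i,j,t}, v j}` have color set `{t}`. -/
def phsColorGraph (n α : ℕ) (F : Fin α → Finset (Finset (Fin n))) (t : Fin α) :
    SimpleGraph ((Fin n × Bool) ⊕ (Fin n × Fin n × Fin α)) :=
  SimpleGraph.fromRel fun a b =>
    (∃ i : Fin n, (∃ f ∈ F t, i ∈ f) ∧
        a = Sum.inl (i, false) ∧ b = Sum.inl (i, true)) ∨
    (∃ i j : Fin n, (∃ f ∈ F t, consecPair f i j) ∧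
        a = Sum.inl (i, true) ∧ b = Sum.inr (i, j, t)) ∨
    (∃ i j : Fin n, (∃ f ∈ F t, consecPair f i j) ∧
        a = Sum.inr (i, j, t) ∧ b = Sum.inl (j, false))


open SimpleGraph


lemma cycle_aux {V : Type*} {G : SimpleGraph V} (φ : V → ℕ)
    (h : ∀ v u1 u2, G.Adj v u1 → G.Adj v u2 → φ u1 ≤ φ v → φ u2 ≤ φ v → u1 = u2)
    {m : V} (c : G.Walk m m) (hc : c.IsCycle)
    (hmax : ∀ b ∈ c.support, φ b ≤ φ m) : False := by
  cases c with
  | nil => exact Walk.IsCycle.not_of_nil hc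
  | @cons _ u _ hadj p =>
    obtain ⟨x, q, h', hcq⟩ := Walk.exists_cons_eq_concat hadj p
    have hu : u ∈ (Walk.cons hadj p).support := by
      simp [Walk.support_cons, Walk.start_mem_support]
    have hx : x ∈ (Walk.cons hadj p).support := by
      rw [hcq, Walk.concat_eq_append]
      exact Walk.subset_support_append_left _ _ (Walk.end_mem_support q)
    have hux : u = x := h m u x hadj h'.symm (hmax u hu) (hmax x hx)
    subst hux
    have hedges : s(m, u) :: p.edges = q.edges ++ [s(u, m)] := by
      have := congrArg Walk.edges hcq
      simpa [Walk.edges_cons, Walk.edges_concat, List.concat_eq_append] using this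
    have hnodup : (s(m, u) :: p.edges).Nodup := hc.edges_nodup
    have hlen := hc.three_le_length
    rw [Walk.length_cons] at hlen
    have hplen : 2 ≤ p.edges.length := by rw [Walk.length_edges]; omega
    have hqne : q.edges ≠ [] := by
      intro hq
      rw [hq] at hedges
      have := congrArg List.length hedges
      simp only [List.length_cons, List.length_append, List.length_nil,
        List.length_singleton] at this
      omega
    obtain ⟨e, l, hel⟩ := List.exists_cons_of_ne_nil hqne
    rw [hel, List.cons_append] at hedges
    obtain ⟨he, hrest⟩ := List.cons.inj hedges
    have hmem : s(m, u) ∈ p.edges := by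
      rw [hrest]
      simp [Sym2.eq_swap]
    exact (List.nodup_cons.mp hnodup).1 hmem

lemma acyclic_of_phi {V : Type*} (G : SimpleGraph V) (φ : V → ℕ)
    (h : ∀ v u1 u2, G.Adj v u1 → G.Adj v u2 → φ u1 ≤ φ v → φ u2 ≤ φ v → u1 = u2) :
    G.IsAcyclic := by
  intro v c hc
  classical
  obtain ⟨m, hm, hmax⟩ : ∃ m ∈ c.support, ∀ b ∈ c.support, φ b ≤ φ m := by
    obtain ⟨m, hm1, hm2⟩ := (c.support.toFinset).exists_max_image φ
      ⟨v, by simp [c.start_mem_support]⟩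
    exact ⟨m, by simpa using hm1, fun b hb => hm2 b (by simpa using hb)⟩
  refine cycle_aux φ h (c.rotate m hm) (hc.rotate hm) ?_
  intro b hb
  rcases (c.rotate m hm).mem_support_iff.mp hb with rfl | hb'
  · exact hmax _ hm
  · have := (c.support_rotate m hm).perm.mem_iff.mp hb'
    exact hmax b (c.mem_support_iff.mpr (Or.inr this))

namespace PHS

abbrev Vt (n α : ℕ) := (Fin n × Bool) ⊕ (Fin n × Fin n × Fin α)


variable {n : ℕ}

def rkf (f : Finset (Fin n)) (i : Fin n) : ℕ := (f.filter (fun l => l < i)).card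

lemma rkf_lt_card {f : Finset (Fin n)} {i : Fin n} (hi : i ∈ f) : rkf f i < f.card :=
  Finset.card_lt_card (((Finset.ssubset_iff_of_subset (Finset.filter_subset _ f)).mpr
    ⟨i, hi, by simp⟩))

lemma rkf_strictmono {f : Finset (Fin n)} {i j : Fin n} (hi : i ∈ f) (hij : i < j) :
    rkf f i < rkf f j := by
  apply Finset.card_lt_card
  rw [Finset.ssubset_iff_of_subset]
  · exact ⟨i, by simp [hi, hij], by simp⟩
  · intro l hl
    simp only [Finset.mem_filter] at hl ⊢
    exact ⟨hl.1, hl.2.trans hij⟩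

lemma rkf_inj {f : Finset (Fin n)} {i j : Fin n} (hi : i ∈ f) (hj : j ∈ f)
    (h : rkf f i = rkf f j) : i = j := by
  rcases lt_trichotomy i j with h' | h' | h'
  · exact absurd h (rkf_strictmono hi h').ne
  · exact h'
  · exact absurd h.symm (rkf_strictmono hj h').ne

lemma consec_mem_left {f : Finset (Fin n)} {i j : Fin n} (h : consecPair f i j) : i ∈ f := by
  rcases h with ⟨h, _⟩ | ⟨h, _⟩ <;> exact h

lemma consec_mem_right {f : Finset (Fin n)} {i j : Fin n} (h : consecPair f i j) : j ∈ f := by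
  rcases h with ⟨_, h, _⟩ | ⟨_, h, _⟩ <;> exact h

lemma rkf_succ {f : Finset (Fin n)} {i j : Fin n} (hij : consecPair f i j) :
    rkf f j = (rkf f i + 1) % f.card := by
  rcases hij with ⟨hi, hj, hlt, hbet⟩ | ⟨hi, hj, hmax, hmin⟩
  · have h1 : f.filter (fun l => l < j) = insert i (f.filter (fun l => l < i)) := by
      ext l
      simp only [Finset.mem_filter, Finset.mem_insert]
      constructor
      · rintro ⟨hl, hlj⟩
        rcases lt_trichotomy l i with h | h | h
        · exact Or.inr ⟨hl, h⟩
        · exact Or.inl h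
        · exact (hbet l hl ⟨h, hlj⟩).elim
      · rintro (rfl | ⟨hl, hli⟩)
        · exact ⟨hi, hlt⟩
        · exact ⟨hl, hli.trans hlt⟩
    have h2 : rkf f j = rkf f i + 1 := by
      rw [rkf, h1, Finset.card_insert_of_notMem (by simp), rkf]
    rw [h2, Nat.mod_eq_of_lt (h2 ▸ rkf_lt_card hj)]
  · have hj0 : rkf f j = 0 := by
      rw [rkf, Finset.card_eq_zero, Finset.filter_eq_empty_iff]
      intro l hl
      exact not_lt.mpr (hmin l hl)
    have hic : rkf f i = f.card - 1 := by
      have he : f.filter (fun l => l < i) = f.erase i := by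
        ext l
        simp only [Finset.mem_filter, Finset.mem_erase]
        constructor
        · rintro ⟨hl, hli⟩
          exact ⟨hli.ne, hl⟩
        · rintro ⟨hne, hl⟩
          exact ⟨hl, (hmax l hl).lt_of_ne hne⟩
      rw [rkf, he, Finset.card_erase_of_mem hi]
    have hc1 : 1 ≤ f.card := Finset.card_pos.mpr ⟨i, hi⟩
    rw [hj0, hic]
    have h3 : f.card - 1 + 1 = f.card := by omega
    rw [h3, Nat.mod_self]

lemma pred_uniq {f : Finset (Fin n)} {i1 i2 j : Fin n}
    (h1 : consecPair f i1 j) (h2 : consecPair f i2 j) : i1 = i2 := by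
  rcases h1 with ⟨hi1, hj1, hl1, hb1⟩ | ⟨hi1, hj1, hmax1, hmin1⟩ <;>
    rcases h2 with ⟨hi2, hj2, hl2, hb2⟩ | ⟨hi2, hj2, hmax2, hmin2⟩
  · rcases lt_trichotomy i1 i2 with h | h | h
    · exact (hb1 i2 hi2 ⟨h, hl2⟩).elim
    · exact h
    · exact (hb2 i1 hi1 ⟨h, hl1⟩).elim
  · exact absurd (hmin2 i1 hi1) (not_le.mpr hl1)
  · exact absurd (hmin1 i2 hi2) (not_le.mpr hl2)
  · exact le_antisymm (hmax2 i1 hi1) (hmax1 i2 hi2)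

variable (F : Fin α → Finset (Finset (Fin n))) (t : Fin α) (S : Finset (Fin n))

noncomputable def fIdx (i : Fin n) : Finset (Fin n) :=
  if h : ∃ f ∈ F t, i ∈ f then h.choose else ∅

lemma fIdx_spec {i : Fin n} (h : ∃ f ∈ F t, i ∈ f) :
    fIdx F t i ∈ F t ∧ i ∈ fIdx F t i := by
  rw [fIdx, dif_pos h]
  exact ⟨h.choose_spec.1, h.choose_spec.2⟩

lemma fIdx_eq (hdisj : ∀ f ∈ F t, ∀ g ∈ F t, f ≠ g → Disjoint f g)
    {g : Finset (Fin n)} (hg : g ∈ F t) {i : Fin n} (hi : i ∈ g) : fIdx F t i = g := by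
  obtain ⟨h1, h2⟩ := fIdx_spec F t (⟨g, hg, hi⟩ : ∃ f ∈ F t, i ∈ f)
  by_contra hne
  exact Finset.disjoint_left.mp (hdisj _ h1 _ hg hne) h2 hi

noncomputable def xrk (f : Finset (Fin n)) : ℕ :=
  if h : ∃ x ∈ S, x ∈ f then rkf f h.choose else 0

noncomputable def sig (i : Fin n) : ℕ :=
  (rkf (fIdx F t i) i + ((fIdx F t i).card - xrk S (fIdx F t i))) % (fIdx F t i).card

noncomputable def phi : Vt n α → ℕ
  | Sum.inl (i, false) => 3 * ((sig F t S i + (fIdx F t i).card - 1) % (fIdx F t i).card) + 2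
  | Sum.inl (i, true) => 3 * sig F t S i
  | Sum.inr (i, _, _) => 3 * sig F t S i + 1

variable {F t S}

lemma sig_pos (hdisj : ∀ f ∈ F t, ∀ g ∈ F t, f ≠ g → Disjoint f g)
    {f : Finset (Fin n)} (hf : f ∈ F t) (hhit : ∃ x ∈ S, x ∈ f)
    {i : Fin n} (hi : i ∈ f) (hiS : i ∉ S) :
    1 ≤ sig F t S i ∧ sig F t S i < f.card := by
  have hfe := fIdx_eq F t hdisj hf hi
  have hm : 0 < f.card := Finset.card_pos.mpr ⟨i, hi⟩
  rw [sig, hfe]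
  refine ⟨?_, Nat.mod_lt _ hm⟩
  rw [xrk, dif_pos hhit]
  obtain ⟨hxS, hxf⟩ := hhit.choose_spec
  have hne : rkf f i ≠ rkf f hhit.choose := fun h => hiS ((rkf_inj hi hxf h) ▸ hxS)
  have ha : rkf f i < f.card := rkf_lt_card hi
  have hb : rkf f hhit.choose < f.card := rkf_lt_card hxf
  by_cases hcase : rkf f i + (f.card - rkf f hhit.choose) < f.card
  · rw [Nat.mod_eq_of_lt hcase]
    omega
  · rw [Nat.mod_eq_sub_mod (le_of_not_gt hcase), Nat.mod_eq_of_lt (by omega)]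
    omega

lemma phi_vw (hdisj : ∀ f ∈ F t, ∀ g ∈ F t, f ≠ g → Disjoint f g)
    {f : Finset (Fin n)} (hf : f ∈ F t) (hhit : ∃ x ∈ S, x ∈ f)
    {i : Fin n} (hi : i ∈ f) (hiS : i ∉ S) :
    phi F t S (Sum.inl (i, false)) < phi F t S (Sum.inl (i, true)) := by
  obtain ⟨h1, h2⟩ := sig_pos hdisj hf hhit hi hiS
  have hfe := fIdx_eq F t hdisj hf hi
  simp only [phi, hfe]
  have h3 : sig F t S i + f.card - 1 = (sig F t S i - 1) + f.card := by omega
  rw [h3, Nat.add_mod_right, Nat.mod_eq_of_lt (by omega)]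
  omega

lemma phi_ws (i j : Fin n) (t' : Fin α) :
    phi F t S (Sum.inl (i, true)) < phi F t S (Sum.inr (i, j, t')) := by
  simp only [phi]
  omega

lemma phi_sv (hdisj : ∀ f ∈ F t, ∀ g ∈ F t, f ≠ g → Disjoint f g)
    {f : Finset (Fin n)} (hf : f ∈ F t)
    {i j : Fin n} (hcons : consecPair f i j) (j' : Fin n) (t' : Fin α) :
    phi F t S (Sum.inr (i, j', t')) < phi F t S (Sum.inl (j, false)) := by
  have hi := consec_mem_left hcons
  have hj := consec_mem_right hcons
  have hfi := fIdx_eq F t hdisj hf hi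
  have hfj := fIdx_eq F t hdisj hf hj
  have hm : 0 < f.card := Finset.card_pos.mpr ⟨i, hi⟩
  simp only [phi]
  have key : (sig F t S j + (fIdx F t j).card - 1) % (fIdx F t j).card = sig F t S i := by
    simp only [sig, hfi, hfj]
    rw [rkf_succ hcons, Nat.mod_add_mod]
    have h1 : (rkf f i + 1 + (f.card - xrk S f)) % f.card + f.card - 1
        = (rkf f i + 1 + (f.card - xrk S f)) % f.card + (f.card - 1) := by omega
    rw [h1, Nat.mod_add_mod]
    have h2 : rkf f i + 1 + (f.card - xrk S f) + (f.card - 1)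
        = (rkf f i + (f.card - xrk S f)) + f.card := by omega
    rw [h2, Nat.add_mod_right]
  rw [key]
  omega


end PHS

namespace PHS

variable {n α : ℕ}

noncomputable def hitEdges (S : Finset (Fin n)) : Finset (Sym2 (Vt n α)) :=
  S.image (fun x => s(Sum.inl (x, false), Sum.inl (x, true)))

variable {F : Fin α → Finset (Finset (Fin n))} {t : Fin α} {S : Finset (Fin n)}

lemma same_f (hdisj : ∀ f ∈ F t, ∀ g ∈ F t, f ≠ g → Disjoint f g)
    {f1 f2 : Finset (Fin n)} (hf1 : f1 ∈ F t) (hf2 : f2 ∈ F t)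
    {j : Fin n} (hj1 : j ∈ f1) (hj2 : j ∈ f2) : f1 = f2 := by
  by_contra hne
  exact Finset.disjoint_left.mp (hdisj f1 hf1 f2 hf2 hne) hj1 hj2

lemma key (hdisj : ∀ f ∈ F t, ∀ g ∈ F t, f ≠ g → Disjoint f g)
    (hS : ∀ f ∈ F t, ∃ x ∈ S, x ∈ f)
    {a b : Vt n α}
    (hab : ((phsColorGraph n α F t).deleteEdges
        ((hitEdges S : Finset (Sym2 (Vt n α))) : Set (Sym2 (Vt n α)))).Adj a b)
    (hle : phi F t S b ≤ phi F t S a) :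
    (∃ i j, a = Sum.inl (j, false) ∧ b = Sum.inr (i, j, t) ∧ ∃ f ∈ F t, consecPair f i j) ∨
    (∃ i, a = Sum.inl (i, true) ∧ b = Sum.inl (i, false)) ∨
    (∃ i j, a = Sum.inr (i, j, t) ∧ b = Sum.inl (i, true)) := by
  rw [SimpleGraph.deleteEdges_adj] at hab
  obtain ⟨hadj, hmem⟩ := hab
  simp only [phsColorGraph, SimpleGraph.fromRel_adj] at hadj
  obtain ⟨hne, hrel | hrel⟩ := hadj <;>
    rcases hrel with ⟨i, hi, ha, hb⟩ | ⟨i, j, hc, ha, hb⟩ | ⟨i, j, hc, ha, hb⟩ <;>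
      subst ha <;> subst hb
  · obtain ⟨f, hf, hif⟩ := hi
    have hiS : i ∉ S := by
      intro hiS
      exact hmem (Finset.mem_coe.mpr (Finset.mem_image_of_mem _ hiS))
    exact absurd hle (not_le.mpr (phi_vw hdisj hf (hS f hf) hif hiS))
  · exact absurd hle (not_le.mpr (phi_ws i j t))
  · obtain ⟨f, hf, hcons⟩ := hc
    exact absurd hle (not_le.mpr (phi_sv hdisj hf hcons j t))
  · exact Or.inr (Or.inl ⟨i, rfl, rfl⟩)
  · exact Or.inr (Or.inr ⟨i, j, rfl, rfl⟩)
  · exact Or.inl ⟨i, j, rfl, rfl, hc⟩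

def pickFn : Vt n α → Vt n α → Fin n
  | Sum.inl (i, _), Sum.inl (j, _) => min i j
  | Sum.inl _, Sum.inr (i, _, _) => i
  | Sum.inr (i, _, _), Sum.inl _ => i
  | Sum.inr (i, _, _), Sum.inr (j, _, _) => min i j

lemma pickFn_symm : ∀ a b : Vt n α, pickFn a b = pickFn b a := by
  rintro (⟨i, bi⟩ | ⟨i, ji, ti⟩) (⟨j, bj⟩ | ⟨j, jj, tj⟩) <;> simp [pickFn, min_comm]

def pick : Sym2 (Vt n α) → Fin n := Sym2.lift ⟨pickFn, pickFn_symm⟩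

end PHS

open PHS SimpleGraph in
/-- Let `U = Fin n` and for each `t` let `F t` be a family of
pairwise disjoint subsets of `U`, each of size at least `2`, and let `(G, col)` be the
`α`-edge-colored graph associated with this Partitioned Hitting Set instance.  Then
there is `S ⊆ U` with `|S| ≤ k` hitting every `f ∈ F t` for every `t` iff `(G, col)`
has a simultaneous feedback edge set of size at most `k`. -/
theorem stmt_10 (n α k : ℕ) (F : Fin α → Finset (Finset (Fin n)))
    (hcard : ∀ t : Fin α, ∀ f ∈ F t, 2 ≤ f.card)
    (hdisj : ∀ t : Fin α, ∀ f ∈ F t, ∀ g ∈ F t, f ≠ g → Disjoint f g) :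
    (∃ S : Finset (Fin n), S.card ≤ k ∧
        ∀ t : Fin α, ∀ f ∈ F t, ∃ x ∈ S, x ∈ f) ↔
    (∃ S : Finset (Sym2 ((Fin n × Bool) ⊕ (Fin n × Fin n × Fin α))),
      S.card ≤ k ∧
      (S : Set (Sym2 ((Fin n × Bool) ⊕ (Fin n × Fin n × Fin α)))) ⊆
        (phsGraph n α F).edgeSet ∧
      ∀ t : Fin α,
        ((phsColorGraph n α F t).deleteEdges
          (S : Set (Sym2 ((Fin n × Bool) ⊕ (Fin n × Fin n × Fin α))))).IsAcyclic) := by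
  constructor
  · rintro ⟨S, hSk, hS⟩
    refine ⟨hitEdges S, le_trans (Finset.card_image_le) hSk, ?_, ?_⟩
    · intro e he
      simp only [hitEdges, Finset.coe_image, Set.mem_image, Finset.mem_coe] at he
      obtain ⟨x, _, rfl⟩ := he
      rw [SimpleGraph.mem_edgeSet]
      simp only [phsGraph, SimpleGraph.fromRel_adj]
      exact ⟨by simp, Or.inl (Or.inl ⟨x, rfl, rfl⟩)⟩
    · intro t
      apply acyclic_of_phi _ (phi F t S)
      intro v u1 u2 h1 h2 le1 le2
      have k1 := key (hdisj t) (hS t) h1 le1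
      have k2 := key (hdisj t) (hS t) h2 le2
      rcases k1 with ⟨i1, j1, ha1, hb1, f1, hf1, hc1⟩ | ⟨i1, ha1, hb1⟩ | ⟨i1, j1, ha1, hb1⟩ <;>
        rcases k2 with ⟨i2, j2, ha2, hb2, f2, hf2, hc2⟩ | ⟨i2, ha2, hb2⟩ | ⟨i2, j2, ha2, hb2⟩ <;>
          subst hb1 <;> subst hb2 <;> rw [ha1] at ha2 <;>
          simp only [Sum.inl.injEq, Sum.inr.injEq, Prod.mk.injEq, and_true, true_and,
            and_self, reduceCtorEq, Bool.false_eq_true, Bool.true_eq_false, false_and,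
            and_false] at ha2
      · obtain rfl : j1 = j2 := ha2
        have hff : f1 = f2 :=
          same_f (hdisj t) hf1 hf2 (consec_mem_right hc1) (consec_mem_right hc2)
        subst hff
        rw [pred_uniq hc1 hc2]
      · obtain rfl : i1 = i2 := ha2
        rfl
      · obtain ⟨rfl, rfl⟩ := ha2
        rfl
  · rintro ⟨S', hk, hsub, hacyc⟩
    refine ⟨S'.image pick, le_trans (Finset.card_image_le) hk, ?_⟩
    intro t f hf
    by_contra hno
    push_neg at hno
    have hne : f.Nonempty := Finset.card_pos.mp (by have := hcard t f hf; omega)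
    set i0 := f.min' hne with hi0
    set H := (phsColorGraph n α F t).deleteEdges
      ((S' : Finset (Sym2 (Vt n α))) : Set (Sym2 (Vt n α))) with hH
    have hnotin : ∀ e : Sym2 (Vt n α), pick e ∈ f → e ∉ S' := by
      intro e hpe he
      exact hno (pick e) (Finset.mem_image_of_mem pick he) hpe
    have E1 : ∀ i : Fin n, i ∈ f →
        s(Sum.inl (i, false), (Sum.inl (i, true) : Vt n α)) ∉ S' := by
      intro i hi
      apply hnotin
      have hp : pick s(Sum.inl (i, false), (Sum.inl (i, true) : Vt n α)) = i := by
        simp [pick, pickFn]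
      rw [hp]; exact hi
    have E2 : ∀ i : Fin n, i ∈ f → ∀ (j : Fin n) (t' : Fin α),
        s(Sum.inl (i, true), (Sum.inr (i, j, t') : Vt n α)) ∉ S' := by
      intro i hi j t'
      apply hnotin
      have hp : pick s(Sum.inl (i, true), (Sum.inr (i, j, t') : Vt n α)) = i := by
        simp [pick, pickFn]
      rw [hp]; exact hi
    have E3 : ∀ i : Fin n, i ∈ f → ∀ (j : Fin n) (t' : Fin α),
        s(Sum.inr (i, j, t'), (Sum.inl (j, false) : Vt n α)) ∉ S' := by
      intro i hi j t'
      apply hnotin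
      have hp : pick s(Sum.inr (i, j, t'), (Sum.inl (j, false) : Vt n α)) = i := by
        simp [pick, pickFn]
      rw [hp]; exact hi
    have adj1 : ∀ i : Fin n, i ∈ f → H.Adj (Sum.inl (i, false)) (Sum.inl (i, true)) := by
      intro i hi
      rw [hH, SimpleGraph.deleteEdges_adj]
      refine ⟨?_, fun hmem => E1 i hi (Finset.mem_coe.mp hmem)⟩
      simp only [phsColorGraph, SimpleGraph.fromRel_adj]
      exact ⟨by simp, Or.inl (Or.inl ⟨i, ⟨f, hf, hi⟩, rfl, rfl⟩)⟩
    have adj2 : ∀ i j : Fin n, consecPair f i j →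
        H.Adj (Sum.inl (i, true)) (Sum.inr (i, j, t)) := by
      intro i j hc
      rw [hH, SimpleGraph.deleteEdges_adj]
      refine ⟨?_, fun hmem => E2 i (consec_mem_left hc) j t (Finset.mem_coe.mp hmem)⟩
      simp only [phsColorGraph, SimpleGraph.fromRel_adj]
      exact ⟨by simp, Or.inl (Or.inr (Or.inl ⟨i, j, ⟨f, hf, hc⟩, rfl, rfl⟩))⟩
    have adj3 : ∀ i j : Fin n, consecPair f i j →
        H.Adj (Sum.inr (i, j, t)) (Sum.inl (j, false)) := by
      intro i j hc
      rw [hH, SimpleGraph.deleteEdges_adj]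
      refine ⟨?_, fun hmem => E3 i (consec_mem_left hc) j t (Finset.mem_coe.mp hmem)⟩
      simp only [phsColorGraph, SimpleGraph.fromRel_adj]
      exact ⟨by simp, Or.inl (Or.inr (Or.inr ⟨i, j, ⟨f, hf, hc⟩, rfl, rfl⟩))⟩
    have base : ∀ c : Fin n, c ∈ f → (∀ l ∈ f, l ≤ c) →
        ∃ p : H.Walk (Sum.inl (c, true)) (Sum.inl (i0, false)),
          s(Sum.inl (i0, false), (Sum.inl (i0, true) : Vt n α)) ∉ p.edges := by
      intro c hc hmx
      have hcons : consecPair f c i0 :=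
        Or.inr ⟨hc, f.min'_mem hne, hmx, fun l hl => f.min'_le l hl⟩
      refine ⟨Walk.cons (adj2 c i0 hcons) (Walk.cons (adj3 c i0 hcons) Walk.nil), ?_⟩
      simp
    have walkclaim : ∀ N : ℕ, ∀ c : Fin n, c ∈ f → (f.filter (fun l => c < l)).card ≤ N →
        ∃ p : H.Walk (Sum.inl (c, true)) (Sum.inl (i0, false)),
          s(Sum.inl (i0, false), (Sum.inl (i0, true) : Vt n α)) ∉ p.edges := by
      intro N
      induction N with
      | zero =>
        intro c hc hN
        refine base c hc ?_
        intro l hl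
        by_contra hlt
        push_neg at hlt
        have hmem : l ∈ f.filter (fun l => c < l) := Finset.mem_filter.mpr ⟨hl, hlt⟩
        have := Finset.card_pos.mpr ⟨l, hmem⟩
        omega
      | succ N ih =>
        intro c hc hN
        by_cases hex : (f.filter (fun l => c < l)).Nonempty
        · have hjm := (f.filter (fun l => c < l)).min'_mem hex
          set j := (f.filter (fun l => c < l)).min' hex with hjdef
          rw [Finset.mem_filter] at hjm
          obtain ⟨hjf, hcj⟩ := hjm
          have hcons : consecPair f c j := by
            refine Or.inl ⟨hc, hjf, hcj, ?_⟩
            rintro l hl ⟨hx1, hx2⟩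
            exact absurd (Finset.min'_le _ l (Finset.mem_filter.mpr ⟨hl, hx1⟩))
              (not_le.mpr hx2)
          have hcardlt : (f.filter (fun l => j < l)).card ≤ N := by
            have hsub2 : f.filter (fun l => j < l) ⊆ (f.filter (fun l => c < l)).erase j := by
              intro l hl
              rw [Finset.mem_filter] at hl
              rw [Finset.mem_erase, Finset.mem_filter]
              exact ⟨(hl.2).ne', hl.1, hcj.trans hl.2⟩
            have h1 := Finset.card_le_card hsub2
            rw [Finset.card_erase_of_mem (Finset.mem_filter.mpr ⟨hjf, hcj⟩)] at h1
            have h2 : 1 ≤ (f.filter (fun l => c < l)).card :=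
              Finset.card_pos.mpr ⟨j, Finset.mem_filter.mpr ⟨hjf, hcj⟩⟩
            have heq1 : (Finset.filter (LT.lt c) f).card
                = (Finset.filter (fun l => c < l) f).card := rfl
            have heq2 : (Finset.filter (LT.lt j) f).card
                = (Finset.filter (fun l => j < l) f).card := rfl
            omega
          obtain ⟨p', hp'⟩ := ih j hjf hcardlt
          refine ⟨Walk.cons (adj2 c j hcons) (Walk.cons (adj3 c j hcons)
            (Walk.cons (adj1 j hjf) p')), ?_⟩
          intro hmem
          simp only [Walk.edges_cons, List.mem_cons] at hmem
          rcases hmem with h | h | h | h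
          · simp at h
          · simp at h
          · have hji : i0 = j := by
              simpa using h
            have hle0 : i0 ≤ c := f.min'_le c hc
            exact absurd (hji ▸ (lt_of_le_of_lt hle0 hcj)) (lt_irrefl _)
          · exact hp' h
        · refine base c hc ?_
          intro l hl
          by_contra hlt
          push_neg at hlt
          exact hex ⟨l, Finset.mem_filter.mpr ⟨hl, hlt⟩⟩
    obtain ⟨p, hp⟩ := walkclaim (f.filter (fun l => i0 < l)).card i0 (f.min'_mem hne) le_rfl
    have hadj0 : H.Adj (Sum.inl (i0, false)) (Sum.inl (i0, true)) := adj1 i0 (f.min'_mem hne)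
    have hbridge := (SimpleGraph.isAcyclic_iff_forall_adj_isBridge.mp (hacyc t)) hadj0
    rw [SimpleGraph.isBridge_iff] at hbridge
    apply hbridge
    rw [SimpleGraph.reachable_deleteEdges_iff_exists_walk]
    exact ⟨p.reverse, by rw [Walk.edges_reverse, List.mem_reverse]; exact hp⟩
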